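/- In the coordinate model of the RBB iteration, let k ≥ 1 and let i ∈ {1,…,n} be such that e_i^k is in shrinking mode, i.e. Σ_{j=1}^n (λ_j − λ_i)·(e_j^{k-1})²·λ_j²·(1+τ_{k-1}λ_j²) ≥ 0. Then |e_i^{k+1}| ≤ (1 − λ_1/λ_n)·|e_i^k|. -/
import Mathlib


/-- In the coordinate model of the RBB iteration, if at step `k+1 ≥ 1`
the component `i` is in shrinking mode, i.e.
`Σ_j (λ_j − λ_i)(e_j^k)²λ_j²(1+τ_kλ_j²) ≥ 0`, then
`|e_i^{k+2}| ≤ (1 − λ_1/λ_n)|e_i^{k+1}|`. -/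
theorem rbb_coordinate_shrinking_mode
    (n : ℕ) (lam : Fin (n + 1) → ℝ) (hpos : 0 < lam 0) (hmono : Monotone lam)
    (T : ℝ) (hT : 0 ≤ T)
    (e : ℕ → Fin (n + 1) → ℝ) (α τ : ℕ → ℝ)
    (hτ : ∀ k, 0 ≤ τ k ∧ τ k ≤ T)
    (hα0 : lam 0 ≤ α 0 ∧ α 0 ≤ lam (Fin.last n))
    (he : ∀ k, e k ≠ 0)
    (hrec : ∀ k i, e (k + 1) i = (1 - lam i / α k) * e k i)
    (hα : ∀ k, α (k + 1) =
      (∑ i, lam i ^ 3 * (1 + τ k * lam i ^ 2) * e k i ^ 2) /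
      (∑ i, lam i ^ 2 * (1 + τ k * lam i ^ 2) * e k i ^ 2)) :
    ∀ (k : ℕ) (i : Fin (n + 1)),
      0 ≤ (∑ j, (lam j - lam i) * e k j ^ 2 * lam j ^ 2 * (1 + τ k * lam j ^ 2)) →
      |e (k + 2) i| ≤ (1 - lam 0 / lam (Fin.last n)) * |e (k + 1) i| := by
  intro k i hshrink
  have hlampos : ∀ j : Fin (n + 1), 0 < lam j := fun j =>
    lt_of_lt_of_le hpos (hmono (Fin.zero_le j))
  have htk : 0 ≤ τ k := (hτ k).1
  -- positivity of each denominator term's auxiliary factor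
  have hfac : ∀ j : Fin (n + 1), 0 < 1 + τ k * lam j ^ 2 := fun j => by
    have := mul_nonneg htk (sq_nonneg (lam j)); linarith
  -- denominator positive
  set D := ∑ j, lam j ^ 2 * (1 + τ k * lam j ^ 2) * e k j ^ 2 with hD_def
  obtain ⟨j0, hj0⟩ : ∃ j, e k j ≠ 0 := by
    by_contra h
    push_neg at h
    exact he k (funext h)
  have hterm_nonneg : ∀ j : Fin (n + 1), j ∈ Finset.univ →
      0 ≤ lam j ^ 2 * (1 + τ k * lam j ^ 2) * e k j ^ 2 := fun j _ =>
    mul_nonneg (mul_nonneg (sq_nonneg _) (hfac j).le) (sq_nonneg _)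
  have hDpos : 0 < D := by
    apply Finset.sum_pos' hterm_nonneg
    refine ⟨j0, Finset.mem_univ _, ?_⟩
    have : 0 < e k j0 ^ 2 := by positivity
    exact mul_pos (mul_pos (pow_pos (hlampos j0) 2) (hfac j0)) this
  set N := ∑ j, lam j ^ 3 * (1 + τ k * lam j ^ 2) * e k j ^ 2 with hN_def
  have hαk : α (k + 1) = N / D := hα k
  -- lam i ≤ α (k+1)
  have hge : lam i ≤ α (k + 1) := by
    rw [hαk, le_div_iff₀ hDpos]
    have : N - lam i * D =
        ∑ j, (lam j - lam i) * e k j ^ 2 * lam j ^ 2 * (1 + τ k * lam j ^ 2) := by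
      rw [hN_def, hD_def, Finset.mul_sum, ← Finset.sum_sub_distrib]
      exact Finset.sum_congr rfl fun j _ => by ring
    linarith [hshrink.trans_eq this.symm]
  -- α (k+1) ≤ lam last
  have hle : α (k + 1) ≤ lam (Fin.last n) := by
    rw [hαk, div_le_iff₀ hDpos]
    rw [hD_def, Finset.mul_sum]
    apply Finset.sum_le_sum
    intro j _
    have h1 : lam j ≤ lam (Fin.last n) := hmono (Fin.le_last j)
    have h2 : 0 ≤ lam j ^ 2 * (1 + τ k * lam j ^ 2) * e k j ^ 2 :=
      hterm_nonneg j (Finset.mem_univ j)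
    nlinarith [mul_le_mul_of_nonneg_right h1 h2]
  have hαpos : 0 < α (k + 1) := lt_of_lt_of_le (hlampos i) hge
  have hratio : lam 0 / lam (Fin.last n) ≤ lam i / α (k + 1) :=
    div_le_div₀ (hlampos i).le (hmono (Fin.zero_le i)) hαpos hle
  have hone : lam i / α (k + 1) ≤ 1 := (div_le_one hαpos).mpr hge
  have hkey : e (k + 2) i = (1 - lam i / α (k + 1)) * e (k + 1) i := hrec (k + 1) i
  rw [hkey, abs_mul, abs_of_nonneg (by linarith : (0:ℝ) ≤ 1 - lam i / α (k + 1))]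
  exact mul_le_mul_of_nonneg_right (by linarith) (abs_nonneg _)
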